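/- Let a ≥ 1. There exists a constant C, depending only on a, such that for all t ∈ ℝ with t ≠ 0 and all x₁ ∈ ℝ, the Lebesgue measure of the set {r ∈ [1/2, 2] : |t r^a + x₁| ≤ 2} is at most C |t|^{−1}. -/

import Mathlib

open MeasureTheory

lemma rpow_gap (a : ℝ) (ha : 1 ≤ a) {r s : ℝ} (hr : 1/2 ≤ r) (hrs : r ≤ s) :
    (2:ℝ) ^ (1 - a) * (s - r) ≤ s ^ a - r ^ a := by
  have hr0 : (0:ℝ) < r := by linarith
  set u : ℝ := (s - r) / r with hu
  have hu0 : 0 ≤ u := div_nonneg (by linarith) (by linarith)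
  have hs : s = r * (1 + u) := by rw [hu]; field_simp; ring
  have hb : 1 + a * u ≤ (1 + u) ^ a :=
    one_add_mul_self_le_rpow_one_add (by linarith) ha
  have hsp : s ^ a = r ^ a * (1 + u) ^ a := by
    rw [hs, Real.mul_rpow hr0.le (by linarith)]
  have hru : r ^ a * u = r ^ (a - 1) * (s - r) := by
    rw [Real.rpow_sub hr0, Real.rpow_one, hu]
    field_simp
  have hra1 : (2:ℝ) ^ (1 - a) ≤ r ^ (a - 1) := by
    have h1 : ((1:ℝ)/2) ^ (a - 1) ≤ r ^ (a - 1) :=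
      Real.rpow_le_rpow (by norm_num) hr (by linarith)
    have h2 : ((1:ℝ)/2) ^ (a - 1) = (2:ℝ) ^ (1 - a) := by
      rw [show (1:ℝ)/2 = 2⁻¹ by norm_num, Real.inv_rpow (by norm_num),
        ← Real.rpow_neg (by norm_num), neg_sub]
    linarith
  have hrpos : (0:ℝ) < r ^ a := Real.rpow_pos_of_pos hr0 a
  have key : r ^ a * (a * u) ≤ s ^ a - r ^ a := by
    rw [hsp]
    nlinarith
  have h3 : r ^ (a - 1) * (s - r) ≤ r ^ a * (a * u) := by
    rw [mul_comm a u, ← mul_assoc, hru]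
    nlinarith [mul_nonneg (Real.rpow_nonneg hr0.le (a-1)) (sub_nonneg.2 hrs)]
  nlinarith [mul_le_mul_of_nonneg_right hra1 (sub_nonneg.2 hrs)]

/-- Sublevel set estimate: for `a ≥ 1` there is a constant `C = C(a)` such that for
all `t ≠ 0` and `x₁ ∈ ℝ`, the Lebesgue measure of
`{r ∈ [1/2, 2] : |t r^a + x₁| ≤ 2}` is at most `C |t|⁻¹`. -/
theorem sublevel_set_estimate (a : ℝ) (ha : 1 ≤ a) :
    ∃ C > 0, ∀ t : ℝ, t ≠ 0 → ∀ x₁ : ℝ,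
      volume {r : ℝ | r ∈ Set.Icc (1/2 : ℝ) 2 ∧ |t * r ^ a + x₁| ≤ 2} ≤
        ENNReal.ofReal (C / |t|) := by
  refine ⟨(2:ℝ) ^ (a + 1), Real.rpow_pos_of_pos (by norm_num) _, fun t ht x₁ => ?_⟩
  have htA : (0:ℝ) < |t| := abs_pos.mpr ht
  set S := {r : ℝ | r ∈ Set.Icc (1/2 : ℝ) 2 ∧ |t * r ^ a + x₁| ≤ 2}
  -- key pairwise distance bound
  have key : ∀ r ∈ S, ∀ s ∈ S, r ≤ s → s - r ≤ (2:ℝ) ^ (a + 1) / |t| := by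
    intro r hrS s hsS hrs
    have hr : 1/2 ≤ r := hrS.1.1
    have hgap := rpow_gap a ha hr hrs
    have h4 : |t| * (s ^ a - r ^ a) ≤ 4 := by
      have := abs_sub (t * s ^ a + x₁) (t * r ^ a + x₁)
      have heq : |t * s ^ a + x₁ - (t * r ^ a + x₁)| = |t| * (s ^ a - r ^ a) := by
        have hmono : r ^ a ≤ s ^ a := Real.rpow_le_rpow (by linarith) hrs (by linarith)
        rw [show t * s ^ a + x₁ - (t * r ^ a + x₁) = t * (s ^ a - r ^ a) by ring,
          abs_mul, abs_of_nonneg (sub_nonneg.2 hmono)]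
      have h1 := hrS.2
      have h2 := hsS.2
      calc |t| * (s ^ a - r ^ a) = |t * s ^ a + x₁ - (t * r ^ a + x₁)| := heq.symm
        _ ≤ |t * s ^ a + x₁| + |t * r ^ a + x₁| := abs_sub _ _
        _ ≤ 4 := by linarith
    have hpow : (2:ℝ) ^ (1 - a) * (2:ℝ) ^ (a + 1) = 4 := by
      rw [← Real.rpow_add (by norm_num), show (1:ℝ)-a+(a+1) = ((2:ℕ):ℝ) by push_cast; ring,
        Real.rpow_natCast]
      norm_num
    have hpos : (0:ℝ) < (2:ℝ) ^ (1 - a) := Real.rpow_pos_of_pos (by norm_num) _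
    have h6 : s - r ≤ 4 / ((2:ℝ) ^ (1 - a) * |t|) := by
      rw [le_div_iff₀ (by positivity)]
      nlinarith
    have h7 : (4:ℝ) / ((2:ℝ) ^ (1 - a) * |t|) = (2:ℝ) ^ (a + 1) / |t| := by
      rw [← hpow]
      field_simp
    linarith [h6, h7.le]
  calc volume S ≤ EMetric.diam S := Real.volume_le_diam S
    _ ≤ ENNReal.ofReal ((2:ℝ) ^ (a + 1) / |t|) := by
        apply EMetric.diam_le
        intro x hx y hy
        rw [edist_dist, Real.dist_eq]
        apply ENNReal.ofReal_le_ofReal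
        rcases le_total x y with h | h
        · rw [abs_of_nonpos (by linarith)]
          simpa using key x hx y hy h
        · rw [abs_of_nonneg (by linarith)]
          exact key y hy x hx h
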